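/- arXiv:2211.00504 — 4 statements merged into one kernel-verified Lean document; each statement's English description precedes it below -/
import Mathlib

section
/- Suppose x ≥ 0, h and h̲ are real numbers with 0 ≤ h̲ ≤ h, and p(x + h) ≤ 0. Then h ≤ (−p(x)) / (3x^2 + 4x + 10 + h̲·(3x + 2) + h̲^2). -/
/-- Upper bound on the correction `h` in the digit-by-digit method for
`p(x) = x^3 + 2x^2 + 10x - 20`: if `x ≥ 0`, `0 ≤ h̲ ≤ h` and `p(x+h) ≤ 0`, then
`h ≤ (−p(x)) / (3x^2 + 4x + 10 + h̲(3x+2) + h̲^2)`. -/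
theorem digit_by_digit_upper_bound (x h hl : ℝ) (hx : 0 ≤ x)
    (hhl : 0 ≤ hl) (hlh : hl ≤ h)
    (hp : (x + h) ^ 3 + 2 * (x + h) ^ 2 + 10 * (x + h) - 20 ≤ 0) :
    h ≤ (-(x ^ 3 + 2 * x ^ 2 + 10 * x - 20)) /
        (3 * x ^ 2 + 4 * x + 10 + hl * (3 * x + 2) + hl ^ 2) := by
  have hD : 0 < 3 * x ^ 2 + 4 * x + 10 + hl * (3 * x + 2) + hl ^ 2 := by positivity
  rw [le_div_iff₀ hD]
  nlinarith [sq_nonneg (h - hl), sq_nonneg h, mul_nonneg hhl hx,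
    mul_nonneg (sub_nonneg.2 hlh) hx, mul_nonneg (mul_nonneg (sub_nonneg.2 hlh) hx) (hhl.trans hlh)]
end

section
/- Let c, d be real numbers and define q(x) = x^3 + c·x − d. Suppose x ≥ 0, h and h̲ are real numbers with 0 ≤ h̲ ≤ h, the divisor satisfies 3x^2 + 3x·h̲ + c > 0, and q(x + h) = 0. Then h ≤ (−q(x)) / (3x^2 + 3x·h̲ + c). -/
/-- Viète / Holdred–Horner upper bound for the depressed cubic `q(x) = x^3 + cx − d`:
if `x ≥ 0`, `0 ≤ h̲ ≤ h`, the divisor `3x^2 + 3x·h̲ + c` is positive and `q(x+h) = 0`,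
then `h ≤ (−q(x)) / (3x^2 + 3x·h̲ + c)`. -/
theorem viete_upper_bound (c d x h hl : ℝ) (hx : 0 ≤ x)
    (hhl : 0 ≤ hl) (hlh : hl ≤ h)
    (hdiv : 0 < 3 * x ^ 2 + 3 * x * hl + c)
    (hq : (x + h) ^ 3 + c * (x + h) - d = 0) :
    h ≤ (-(x ^ 3 + c * x - d)) / (3 * x ^ 2 + 3 * x * hl + c) := by
  rw [le_div_iff₀ hdiv]
  nlinarith [mul_nonneg hx (sub_nonneg.2 hlh), sq_nonneg h, hhl.trans hlh]
end

section
/- Let x₅ = 1 + 22/60 + 7/60^2 + 42/60^3 + 33/60^4 + 4/60^5. Then p(x₅ + 38/60^6) < 0 < p(x₅ + 39/60^6); that is, 38 is the largest natural number α with p(x₅ + α/60^6) ≤ 0, so the correct sixth fractional sexagesimal digit of the root is 38. -/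
/-- For `p(x) = x^3 + 2x^2 + 10x - 20` and
`x₅ = 1 + 22/60 + 7/60^2 + 42/60^3 + 33/60^4 + 4/60^5`:
`p(x₅ + 38/60^6) < 0 < p(x₅ + 39/60^6)`, i.e. `38` is the largest natural `α`
with `p(x₅ + α/60^6) ≤ 0`, so the correct sixth fractional sexagesimal digit is 38. -/
theorem correct_sixth_sexagesimal_digit :
    let p : ℝ → ℝ := fun x => x ^ 3 + 2 * x ^ 2 + 10 * x - 20
    let x₅ : ℝ := 1 + 22 / 60 + 7 / 60 ^ 2 + 42 / 60 ^ 3 + 33 / 60 ^ 4 + 4 / 60 ^ 5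
    (p (x₅ + 38 / 60 ^ 6) < 0) ∧ (0 < p (x₅ + 39 / 60 ^ 6)) ∧
    IsGreatest {α : ℕ | p (x₅ + α / 60 ^ 6) ≤ 0} 38 := by
  intro p x₅
  have h38 : p (x₅ + 38 / 60 ^ 6) < 0 := by norm_num [p, x₅]
  have h39 : (0 : ℝ) < p (x₅ + 39 / 60 ^ 6) := by norm_num [p, x₅]
  refine ⟨h38, h39, le_of_lt h38, ?_⟩
  intro α hα
  by_contra h
  push_neg at h
  have h39α : (39 : ℝ) ≤ (α : ℝ) := by exact_mod_cast h
  have hx : x₅ + 39 / 60 ^ 6 ≤ x₅ + (α : ℝ) / 60 ^ 6 := by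
    have : (39 : ℝ) / 60 ^ 6 ≤ (α : ℝ) / 60 ^ 6 := by gcongr
    linarith
  have hmono : p (x₅ + 39 / 60 ^ 6) ≤ p (x₅ + (α : ℝ) / 60 ^ 6) := by
    set a := x₅ + 39 / 60 ^ 6
    set b := x₅ + (α : ℝ) / 60 ^ 6
    have ha : (0 : ℝ) ≤ a := by norm_num [a, x₅]
    have hb : (0 : ℝ) ≤ b := le_trans ha hx
    show a ^ 3 + 2 * a ^ 2 + 10 * a - 20 ≤ b ^ 3 + 2 * b ^ 2 + 10 * b - 20
    nlinarith [sq_nonneg a, sq_nonneg b, mul_nonneg ha hb, hx]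
  have := hα
  simp only [Set.mem_setOf_eq] at this
  linarith
end

section
/- Let a, b, c be real numbers with b > 0 and c > 0, and let x > 0 with x ≠ c. If the point (x, y) with y = bc/x lies on the circle (x − (c−a)/2)^2 + (y − b)^2 = ((a+c)/2)^2, then x^3 + a·x^2 + b^2·x = b^2·c. -/
/-- Omar Khayyam's geometric solution of `x^3 + ax^2 + b^2 x = b^2 c`: if `b > 0`,
`c > 0`, `x > 0`, `x ≠ c`, `y = bc/x`, and `(x, y)` lies on the circle
`(x − (c−a)/2)^2 + (y − b)^2 = ((a+c)/2)^2`, then `x^3 + ax^2 + b^2 x = b^2 c`. -/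
theorem khayyam_geometric_solution (a b c x : ℝ) (hb : 0 < b) (hc : 0 < c)
    (hx : 0 < x) (hxc : x ≠ c)
    (hcircle : (x - (c - a) / 2) ^ 2 + (b * c / x - b) ^ 2 = ((a + c) / 2) ^ 2) :
    x ^ 3 + a * x ^ 2 + b ^ 2 * x = b ^ 2 * c := by
  have hx0 : x ≠ 0 := ne_of_gt hx
  have key : (x - c) * (x ^ 3 + a * x ^ 2 + b ^ 2 * x - b ^ 2 * c) = 0 := by
    have h := hcircle
    field_simp at h
    nlinarith [h]
  rcases mul_eq_zero.mp key with h | h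
  · exact absurd (sub_eq_zero.mp h) hxc
  · linarith
end
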